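/- cov(𝒩) ≤ 𝔞(𝒩_T): if ℱ ⊆ 𝒩_T is a pairwise almost disjoint family of cardinality less than cov(𝒩), then some branch B(f) ∈ 𝒩_T is almost disjoint from every member of ℱ, so ℱ is not mad in 𝒩_T. -/

import Mathlib

open Cardinal Set

/-- The full binary tree `T = 2^{<ω}`, modeled as finite lists of booleans;
`s ≤ t` iff `t` is a prefix of `s` (i.e. `s` extends `t`). -/
abbrev BinTree := List Bool

/-- The restriction `f↾n ∈ 2^{<ω}` of `f ∈ 2^ω`. -/
def restr (f : ℕ → Bool) (n : ℕ) : BinTree := List.ofFn (fun i : Fin n => f i)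

/-- The branch `B(f) = { f↾n : n ∈ ω }` induced by `f ∈ 2^ω`. -/
def branch (f : ℕ → Bool) : Set BinTree := Set.range (restr f)

/-- `⌊X⌋ = { f ∈ 2^ω : |B(f) ∩ X| = ℵ₀ }`. -/
def floorSet (X : Set BinTree) : Set (ℕ → Bool) := {f | (branch f ∩ X).Infinite}

/-- `X` is covered by finitely many branches of `T`. -/
def CoveredByFinitelyManyBranches (X : Set BinTree) : Prop :=
  ∃ s : Finset (ℕ → Bool), X ⊆ ⋃ f ∈ s, branch f

/-- `X` contains no infinite antichain (w.r.t. the prefix/extension order on `T`). -/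
def NoInfiniteAntichain (X : Set BinTree) : Prop :=
  ¬ ∃ A ⊆ X, A.Infinite ∧ IsAntichain (· <+: ·) A

/-- The class `ℬ_T` of infinite subsets of `T` containing no infinite antichain. -/
def Bclass : Set (Set BinTree) := { X | X.Infinite ∧ NoInfiniteAntichain X }

/-- The class `𝒜_T` of infinite antichains of `T`. -/
def Aclass : Set (Set BinTree) := { X | X.Infinite ∧ IsAntichain (· <+: ·) X }

/-- The class `𝒩𝒟_T` of infinite `X ⊆ T` with `⌊X⌋` nowhere dense in Cantor space. -/
def NDclass : Set (Set BinTree) := { X | X.Infinite ∧ IsNowhereDense (floorSet X) }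

/-- `σ` is the standard fair-coin product measure on `2^ω`, characterized as a
probability measure giving each basic clopen set `{ f : f↾ℓ(t) = t }` measure `2^{-ℓ(t)}`. -/
def IsCantorMeasure (σ : MeasureTheory.Measure (ℕ → Bool)) : Prop :=
  MeasureTheory.IsProbabilityMeasure σ ∧
    ∀ t : BinTree, σ { f | restr f t.length = t } = (2 : ENNReal)⁻¹ ^ t.length

/-- The class `𝒩_T` (w.r.t. a measure `σ` on `2^ω`) of infinite `X ⊆ T` with `σ(⌊X⌋) = 0`. -/
def Nclass (σ : MeasureTheory.Measure (ℕ → Bool)) : Set (Set BinTree) :=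
  { X | X.Infinite ∧ σ (floorSet X) = 0 }

/-- Pairwise almost disjoint family of infinite sets. -/
def ADFamily {α : Type*} (F : Set (Set α)) : Prop :=
  (∀ X ∈ F, X.Infinite) ∧ F.Pairwise fun X Y => (X ∩ Y).Finite

/-- `F` is a maximal almost disjoint family within `𝒳`. -/
def MadIn {α : Type*} (𝒳 F : Set (Set α)) : Prop :=
  F ⊆ 𝒳 ∧ ADFamily F ∧ ∀ Y ∈ 𝒳, ∃ X ∈ F, (Y ∩ X).Infinite

/-- The collection `[α]^{ℵ₀}` of all infinite subsets of `α`. -/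
def infSets (α : Type*) : Set (Set α) := { X | X.Infinite }

/-- `𝔞(𝒳)`: the least cardinality of an infinite mad family within `𝒳`. -/
noncomputable def aInv {α : Type*} (𝒳 : Set (Set α)) : Cardinal :=
  sInf { c : Cardinal | ∃ F, F.Infinite ∧ MadIn 𝒳 F ∧ #F = c }

/-- `cov(ℳ)`: the least number of meager subsets of `2^ω` covering `2^ω`. -/
noncomputable def covMeager : Cardinal :=
  sInf { c : Cardinal | ∃ S : Set (Set (ℕ → Bool)),
    (∀ A ∈ S, IsMeagre A) ∧ ⋃₀ S = Set.univ ∧ #S = c }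

/-- `cov(𝒩)`: the least number of `σ`-null subsets of `2^ω` covering `2^ω`. -/
noncomputable def covNull (σ : MeasureTheory.Measure (ℕ → Bool)) : Cardinal :=
  sInf { c : Cardinal | ∃ S : Set (Set (ℕ → Bool)),
    (∀ A ∈ S, σ A = 0) ∧ ⋃₀ S = Set.univ ∧ #S = c }

/-- `F^⊥`: the family of infinite sets almost disjoint from every member of `F`. -/
def perp {α : Type*} (F : Set (Set α)) : Set (Set α) :=
  { Y | Y.Infinite ∧ ∀ X ∈ F, (Y ∩ X).Finite }

/-- Membership in the ideal `ℐ(G)` generated by `G` together with the finite sets: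
`S ⊆* ∪G'` for some finite `G' ⊆ G`. -/
def InIdeal {α : Type*} (G : Set (Set α)) (S : Set α) : Prop :=
  ∃ G' : Finset (Set α), ↑G' ⊆ G ∧ (S \ ⋃₀ ↑G').Finite

/-- `𝔞⁺(F) = 𝔞(F^⊥)`. -/
noncomputable def aPlus {α : Type*} (F : Set (Set α)) : Cardinal := aInv (perp F)

/-- `B` almost decides `F`: `B^⊥` is exactly the family of infinite members of
the ideal generated by `F \ B` and the finite sets. -/
def AlmostDecides {α : Type*} (B F : Set (Set α)) : Prop :=
  perp B = { Y | Y.Infinite ∧ InIdeal (F \ B) Y }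

/-- A subset `C` of a poset is centered: every finite subset of `C` has a common
lower bound. -/
def Centered {P : Type*} [Preorder P] (C : Set P) : Prop :=
  ∀ s : Finset P, ↑s ⊆ C → ∃ p, ∀ q ∈ s, p ≤ q

/-- A poset is σ-centered: it is a countable union of centered subsets. -/
def SigmaCentered (P : Type*) [Preorder P] : Prop :=
  ∃ C : ℕ → Set P, (∀ n, Centered (C n)) ∧ ⋃ n, C n = Set.univ

/-- `D` is dense (below every condition) in the poset `P`. -/
def DenseBelow {P : Type*} [Preorder P] (D : Set P) : Prop :=
  ∀ p : P, ∃ q ∈ D, q ≤ p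

/-- `G` is a filter on the poset `P`. -/
def IsFilterOn {P : Type*} [Preorder P] (G : Set P) : Prop :=
  (∀ p ∈ G, ∀ q, p ≤ q → q ∈ G) ∧ ∀ p ∈ G, ∀ q ∈ G, ∃ r ∈ G, r ≤ p ∧ r ≤ q

/-- Martin's axiom for σ-centered posets: for every nonempty σ-centered poset and
fewer than continuum many dense sets there is a filter meeting them all. -/
def MASigmaCentered : Prop :=
  ∀ (P : Type) (_ : Preorder P) (_ : Nonempty P), SigmaCentered P →
    ∀ 𝒟 : Set (Set P), #𝒟 < Cardinal.continuum → (∀ D ∈ 𝒟, DenseBelow D) →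
      ∃ G : Set P, IsFilterOn G ∧ ∀ D ∈ 𝒟, (G ∩ D).Nonempty

section AuxStmt9

lemma restr_length (f : ℕ → Bool) (n : ℕ) : (restr f n).length = n := by
  simp [restr]

lemma restr_eq_iff {f g : ℕ → Bool} {n : ℕ} :
    restr f n = restr g n ↔ ∀ i < n, f i = g i := by
  simp only [restr, List.ofFn_inj, funext_iff]
  exact ⟨fun h i hi => h ⟨i, hi⟩, fun h i => h i i.isLt⟩

lemma restr_injective (f : ℕ → Bool) : Function.Injective (restr f) := by
  intro n m h
  have := congrArg List.length h
  simpa [restr_length] using this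

lemma branch_infinite (f : ℕ → Bool) : (branch f).Infinite :=
  Set.infinite_range_of_injective (restr_injective f)

lemma branch_inter_finite {f g : ℕ → Bool} (h : f ≠ g) :
    (branch f ∩ branch g).Finite := by
  obtain ⟨n, hn⟩ := Function.ne_iff.1 h
  apply (Set.finite_Iic n).image (restr f) |>.subset
  rintro x ⟨⟨k, rfl⟩, ⟨m, hm⟩⟩
  have hkm : m = k := by
    have := congrArg List.length hm
    simpa [restr_length] using this
  subst hkm
  refine ⟨m, ?_, rfl⟩
  by_contra hk
  simp only [Set.mem_Iic, not_le] at hk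
  exact hn ((restr_eq_iff.1 hm) n hk).symm

lemma singleton_null {σ : MeasureTheory.Measure (ℕ → Bool)}
    (hσ : IsCantorMeasure σ) (g : ℕ → Bool) : σ {g} = 0 := by
  have h1 : ∀ n : ℕ, σ {g} ≤ (2 : ENNReal)⁻¹ ^ n := by
    intro n
    have h2 := hσ.2 (restr g n)
    rw [restr_length] at h2
    calc σ {g} ≤ σ {f | restr f n = restr g n} := by
          apply MeasureTheory.measure_mono
          rintro x rfl; rfl
      _ = (2 : ENNReal)⁻¹ ^ n := h2
  have ht : Filter.Tendsto (fun n : ℕ => (2 : ENNReal)⁻¹ ^ n) Filter.atTop (nhds 0) :=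
    ENNReal.tendsto_pow_atTop_nhds_zero_of_lt_one (by simp [ENNReal.inv_lt_one])
  exact le_antisymm (ge_of_tendsto' ht h1) zero_le

lemma branch_mem_Nclass {σ : MeasureTheory.Measure (ℕ → Bool)}
    (hσ : IsCantorMeasure σ) (f : ℕ → Bool) : branch f ∈ Nclass σ := by
  refine ⟨branch_infinite f, ?_⟩
  have hsub : floorSet (branch f) ⊆ {f} := by
    intro g hg
    by_contra hgf
    exact hg (branch_inter_finite hgf)
  exact MeasureTheory.measure_mono_null hsub (singleton_null hσ f)

lemma key {σ : MeasureTheory.Measure (ℕ → Bool)} (hσ : IsCantorMeasure σ)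
    (F : Set (Set BinTree)) (hF : F ⊆ Nclass σ) (hlt : #F < covNull σ) :
    ∃ f : ℕ → Bool, branch f ∈ Nclass σ ∧ ∀ X ∈ F, (branch f ∩ X).Finite := by
  have hne : ⋃₀ (floorSet '' F) ≠ Set.univ := by
    intro h
    have hmem : covNull σ ≤ #(floorSet '' F) :=
      csInf_le' ⟨floorSet '' F, by rintro A ⟨X, hX, rfl⟩; exact (hF hX).2, h, rfl⟩
    exact absurd (hmem.trans (Cardinal.mk_image_le)) (not_le.2 hlt)
  obtain ⟨f, hf⟩ := (Set.ne_univ_iff_exists_notMem _).1 hne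
  refine ⟨f, branch_mem_Nclass hσ f, fun X hX => ?_⟩
  rw [← Set.not_infinite]
  intro hinf
  exact hf ⟨floorSet X, ⟨X, hX, rfl⟩, hinf⟩

lemma branch_injective : Function.Injective branch := by
  intro f g h
  by_contra hfg
  have := branch_inter_finite hfg
  rw [h, Set.inter_self] at this
  exact (branch_infinite g) this

lemma exists_mad {σ : MeasureTheory.Measure (ℕ → Bool)} (hσ : IsCantorMeasure σ) :
    ∃ F : Set (Set BinTree), F.Infinite ∧ MadIn (Nclass σ) F := by
  set F₀ : Set (Set BinTree) := Set.range branch with hF₀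
  set S : Set (Set (Set BinTree)) :=
    {F | F ⊆ Nclass σ ∧ ADFamily F ∧ F₀ ⊆ F} with hS
  have hAD₀ : ADFamily F₀ := by
    constructor
    · rintro X ⟨f, rfl⟩; exact branch_infinite f
    · rintro X ⟨f, rfl⟩ Y ⟨g, rfl⟩ hne
      exact branch_inter_finite (fun h => hne (by rw [h]))
  have h₀ : F₀ ∈ S := by
    refine ⟨?_, hAD₀, subset_rfl⟩
    rintro X ⟨f, rfl⟩; exact branch_mem_Nclass hσ f
  obtain ⟨M, hM₀, hMmem, hMmax⟩ := zorn_subset_nonempty S (fun c hcS hchain hcne => by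
    refine ⟨⋃₀ c, ⟨?_, ⟨?_, ?_⟩, ?_⟩, fun s hs => Set.subset_sUnion_of_mem hs⟩
    · rintro X ⟨s, hs, hX⟩; exact (hcS hs).1 hX
    · rintro X ⟨s, hs, hX⟩; exact (hcS hs).2.1.1 X hX
    · rintro X ⟨s, hs, hX⟩ Y ⟨t, ht, hY⟩ hne
      rcases hchain.total hs ht with h | h
      · exact (hcS ht).2.1.2 (h hX) hY hne
      · exact (hcS hs).2.1.2 hX (h hY) hne
    · obtain ⟨s, hs⟩ := hcne
      exact (hcS hs).2.2.trans (Set.subset_sUnion_of_mem hs)) F₀ h₀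
  refine ⟨M, ?_, hMmem.1, hMmem.2.1, ?_⟩
  · exact (Set.infinite_range_of_injective branch_injective).mono hM₀
  · intro Y hY
    by_contra hcon
    push_neg at hcon
    have hYfin : ∀ X ∈ M, (Y ∩ X).Finite := fun X hX =>
      hcon X hX
    have hins : insert Y M ∈ S := by
      refine ⟨?_, ⟨?_, ?_⟩, hMmem.2.2.trans (Set.subset_insert _ _)⟩
      · exact Set.insert_subset hY hMmem.1
      · rintro X (rfl | hX)
        · exact hY.1
        · exact hMmem.2.1.1 X hX
      · rw [Set.pairwise_insert]
        exact ⟨hMmem.2.1.2, fun X hX _ =>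
          ⟨hYfin X hX, by rw [Set.inter_comm]; exact hYfin X hX⟩⟩
    have hsub : insert Y M ⊆ M := hMmax hins (Set.subset_insert _ _)
    have : Y ∈ M := hsub (Set.mem_insert _ _)
    have := hYfin Y this
    rw [Set.inter_self] at this
    exact hY.1 this

end AuxStmt9

/-- `cov(𝒩) ≤ 𝔞(𝒩_T)`: an ad family in `𝒩_T` of size `< cov(𝒩)` is not mad in `𝒩_T`,
as witnessed by a branch. -/
theorem stmt9 (σ : MeasureTheory.Measure (ℕ → Bool)) (hσ : IsCantorMeasure σ) :
    covNull σ ≤ aInv (Nclass σ) ∧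
    ∀ F : Set (Set BinTree), F ⊆ Nclass σ → ADFamily F → #F < covNull σ →
      ∃ f : ℕ → Bool, branch f ∈ Nclass σ ∧ ∀ X ∈ F, (branch f ∩ X).Finite := by
  constructor
  · obtain ⟨F, hinf, hmad⟩ := exists_mad hσ
    refine le_csInf ⟨#F, ⟨F, hinf, hmad, rfl⟩⟩ ?_
    rintro c ⟨G, hGinf, hGmad, rfl⟩
    by_contra h
    push_neg at h
    obtain ⟨f, hfN, hfin⟩ := key hσ G hGmad.1 h
    obtain ⟨X, hX, hinf'⟩ := hGmad.2.2 (branch f) hfN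
    exact hinf' (hfin X hX)
  · intro F hF _ hlt
    exact key hσ F hF hlt
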